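/- Fix ψ₁ ∈ [−π/2, π/2] and define η(ψ₂, φ) = √(2(1 + cos ψ₁ cos ψ₂ + cos φ · sin ψ₁ sin ψ₂)) + 2√(cos ψ₁ cos ψ₂) for (ψ₂, φ) ∈ [−π/2, π/2] × [0, π]. Then the maximum of η over [−π/2, π/2] × [0, π] exists and equals √2·((1−sin ψ₁)^{1/3} + (1+sin ψ₁)^{1/3})^{3/2}; that is, η(ψ₂,φ) ≤ √2·((1−sin ψ₁)^{1/3} + (1+sin ψ₁)^{1/3})^{3/2} for all (ψ₂,φ) in the domain, and this bound is attained. -/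

import Mathlib

open Real

noncomputable section

set_option maxHeartbeats 1000000

lemma tangent_ineq (p q r u v : ℝ) (hp : 0 ≤ p) (hq : 0 ≤ q) (hr : 0 ≤ r)
    (hr2 : r^2 = p*q) (hu1 : u ≤ 1) (hv : v^2 ≤ 1 - u^2) :
    |q - p| * |v| ≤ (p + q) - 2*r*u := by
  have h2r : 2*r ≤ p + q := by nlinarith [sq_nonneg (p - q)]
  have h1 : 0 ≤ p + q - 2*r*u := by nlinarith
  have h2 : (|q - p| * |v|)^2 ≤ (p + q - 2*r*u)^2 := by
    rw [mul_pow, sq_abs, sq_abs]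
    nlinarith [sq_nonneg (2*r - (p+q)*u), sq_nonneg (q - p), sq_nonneg v]
  calc |q - p| * |v| = Real.sqrt ((|q - p| * |v|)^2) := (Real.sqrt_sq (by positivity)).symm
    _ ≤ Real.sqrt ((p + q - 2*r*u)^2) := Real.sqrt_le_sqrt h2
    _ = p + q - 2*r*u := Real.sqrt_sq h1

lemma cauchy_step (p q r u a z : ℝ) (hr : 0 ≤ r) (hr2 : r^2 = p*q)
    (hS : (0:ℝ) < p^2 + q^2)
    (ha0 : 0 ≤ a) (hz0 : 0 ≤ z)
    (ha2 : a^2 = 2*(p^2+q^2)*((p+q) - r*u)) (hz2 : z^2 = r*u) :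
    a + 2*(r*z) ≤ Real.sqrt (2*(p+q)^3) := by
  have hsq : (a + 2*(r*z))^2 ≤ 2*(p+q)^3 := by
    have amg : (p^2+q^2)*(4*(a*(r*z))) ≤ 2*r^2*a^2 + 2*(p^2+q^2)^2*z^2 := by
      nlinarith [sq_nonneg (r*a - (p^2+q^2)*z)]
    have last : (p^2+q^2)*a^2 + (2*r^2*a^2 + 2*(p^2+q^2)^2*z^2) + 4*(p^2+q^2)*r^2*z^2
        = (p^2+q^2) * (2*(p+q)^3) := by
      rw [ha2, hz2]; linear_combination (4*(p^2+q^2)*(p+q))*hr2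
    have hkey : (p^2+q^2) * (a + 2*(r*z))^2 ≤ (p^2+q^2) * (2*(p+q)^3) := by
      calc (p^2+q^2) * (a + 2*(r*z))^2
          = (p^2+q^2)*a^2 + (p^2+q^2)*(4*(a*(r*z))) + 4*(p^2+q^2)*r^2*z^2 := by ring
        _ ≤ (p^2+q^2)*a^2 + (2*r^2*a^2 + 2*(p^2+q^2)^2*z^2) + 4*(p^2+q^2)*r^2*z^2 := by
            linarith [amg]
        _ = (p^2+q^2) * (2*(p+q)^3) := last
    exact le_of_mul_le_mul_left hkey hS
  calc a + 2*(r*z) = Real.sqrt ((a + 2*(r*z))^2) := (Real.sqrt_sq (by positivity)).symm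
    _ ≤ Real.sqrt (2*(p+q)^3) := Real.sqrt_le_sqrt hsq

lemma aux_ineq (p q r u v t : ℝ) (hp : 0 ≤ p) (hq : 0 ≤ q) (hr : 0 ≤ r)
    (hr2 : r^2 = p*q) (hpq3 : p^3 + q^3 = 2) (hu : 0 ≤ u)
    (huv : u^2 + v^2 = 1) (ht : |t| ≤ 1) :
    Real.sqrt (2*(1 + r^3*u + t*((q^3 - p^3)/2)*v)) + 2*Real.sqrt (r^3*u)
      ≤ Real.sqrt (2*(p+q)^3) := by
  have hu1 : u ≤ 1 := by nlinarith [sq_nonneg v]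
  have h2r : 2*r ≤ p + q := by nlinarith [sq_nonneg (p - q)]
  have htan := tangent_ineq p q r u v hp hq hr hr2 hu1 (by linarith [huv])
  have hstep1 : t*((q^3 - p^3)/2)*v ≤ (p^2 + p*q + q^2)/2 * (|q - p| * |v|) := by
    calc t*((q^3 - p^3)/2)*v ≤ |t*((q^3 - p^3)/2)*v| := le_abs_self _
      _ = |t| * |(q^3 - p^3)/2| * |v| := by rw [abs_mul, abs_mul]
      _ ≤ 1 * |(q^3 - p^3)/2| * |v| := by gcongr
      _ = |(q^3 - p^3)/2| * |v| := by ring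
      _ = (p^2 + p*q + q^2)/2 * (|q - p| * |v|) := by
          rw [show (q^3 - p^3)/2 = (q - p) * ((p^2 + p*q + q^2)/2) by ring, abs_mul,
            abs_of_nonneg (by positivity : (0:ℝ) ≤ (p^2 + p*q + q^2)/2)]
          ring
  have hstep2 : (p^2 + p*q + q^2)/2 * (|q - p| * |v|) ≤
      (p^2 + p*q + q^2)/2 * ((p + q) - 2*r*u) :=
    mul_le_mul_of_nonneg_left htan (by positivity)
  have hX : 2*(1 + r^3*u + t*((q^3 - p^3)/2)*v) ≤ 2*(p^2+q^2)*((p+q) - r*u) := by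
    have hid : 2 + 2*(r^3*u) + 2*((p^2 + p*q + q^2)/2 * ((p + q) - 2*r*u))
        = 2*(p^2+q^2)*((p+q) - r*u) := by
      linear_combination (-1 : ℝ)*hpq3 + (2*r*u)*hr2
    linarith [hstep1, hstep2]
  have hru : r*u ≤ p + q := by nlinarith [mul_le_mul_of_nonneg_left hu1 hr]
  have hA0 : 0 ≤ 2*(p^2+q^2)*((p+q) - r*u) := by
    have h1 : (0:ℝ) ≤ p^2 + q^2 := by positivity
    have h2 : (0:ℝ) ≤ (p+q) - r*u := by linarith
    positivity
  have hS : (0:ℝ) < p^2 + q^2 := by nlinarith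
  have hmain := cauchy_step p q r u (Real.sqrt (2*(p^2+q^2)*((p+q) - r*u)))
    (Real.sqrt (r*u)) hr hr2 hS (Real.sqrt_nonneg _) (Real.sqrt_nonneg _)
    (Real.sq_sqrt hA0) (Real.sq_sqrt (by positivity))
  have hb : Real.sqrt (r^3*u) = r * Real.sqrt (r*u) := by
    rw [show r^3*u = r^2*(r*u) by ring, Real.sqrt_mul (sq_nonneg r), Real.sqrt_sq hr]
  calc Real.sqrt (2*(1 + r^3*u + t*((q^3 - p^3)/2)*v)) + 2*Real.sqrt (r^3*u)
      ≤ Real.sqrt (2*(p^2+q^2)*((p+q) - r*u)) + 2*Real.sqrt (r^3*u) := by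
        gcongr
    _ = Real.sqrt (2*(p^2+q^2)*((p+q) - r*u)) + 2*(r*Real.sqrt (r*u)) := by rw [hb]
    _ ≤ Real.sqrt (2*(p+q)^3) := hmain

/-- For fixed `ψ₁ ∈ [−π/2, π/2]`, the maximum over
`(ψ₂, φ) ∈ [−π/2, π/2] × [0, π]` of
`η(ψ₂,φ) = √(2(1 + cos ψ₁ cos ψ₂ + cos φ sin ψ₁ sin ψ₂)) + 2√(cos ψ₁ cos ψ₂)`
exists and equals `√2·((1−sin ψ₁)^{1/3}+(1+sin ψ₁)^{1/3})^{3/2}`. -/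
theorem max_eta
    (ψ₁ : ℝ) (hψ₁ : ψ₁ ∈ Set.Icc (-(π / 2)) (π / 2)) :
    (∀ ψ₂ ∈ Set.Icc (-(π / 2)) (π / 2), ∀ φ ∈ Set.Icc (0 : ℝ) π,
        Real.sqrt (2 * (1 + Real.cos ψ₁ * Real.cos ψ₂ +
            Real.cos φ * Real.sin ψ₁ * Real.sin ψ₂)) +
          2 * Real.sqrt (Real.cos ψ₁ * Real.cos ψ₂) ≤
        Real.sqrt 2 *
          ((1 - Real.sin ψ₁) ^ ((1 : ℝ) / 3) +
            (1 + Real.sin ψ₁) ^ ((1 : ℝ) / 3)) ^ ((3 : ℝ) / 2)) ∧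
    (∃ ψ₂ ∈ Set.Icc (-(π / 2)) (π / 2), ∃ φ ∈ Set.Icc (0 : ℝ) π,
        Real.sqrt (2 * (1 + Real.cos ψ₁ * Real.cos ψ₂ +
            Real.cos φ * Real.sin ψ₁ * Real.sin ψ₂)) +
          2 * Real.sqrt (Real.cos ψ₁ * Real.cos ψ₂) =
        Real.sqrt 2 *
          ((1 - Real.sin ψ₁) ^ ((1 : ℝ) / 3) +
            (1 + Real.sin ψ₁) ^ ((1 : ℝ) / 3)) ^ ((3 : ℝ) / 2)) := by
  have hs1 : -1 ≤ Real.sin ψ₁ := Real.neg_one_le_sin ψ₁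
  have hs1' : Real.sin ψ₁ ≤ 1 := Real.sin_le_one ψ₁
  set s₁ := Real.sin ψ₁ with hs₁def
  set p := (1 - s₁) ^ ((1 : ℝ)/3) with hpdef
  set q := (1 + s₁) ^ ((1 : ℝ)/3) with hqdef
  have hp : 0 ≤ p := Real.rpow_nonneg (by linarith) _
  have hq : 0 ≤ q := Real.rpow_nonneg (by linarith) _
  have hp3 : p^3 = 1 - s₁ := by
    rw [hpdef, ← Real.rpow_natCast ((1 - s₁) ^ ((1:ℝ)/3)) 3,
      ← Real.rpow_mul (by linarith)]
    norm_num
  have hq3 : q^3 = 1 + s₁ := by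
    rw [hqdef, ← Real.rpow_natCast ((1 + s₁) ^ ((1:ℝ)/3)) 3,
      ← Real.rpow_mul (by linarith)]
    norm_num
  have hpq3 : p^3 + q^3 = 2 := by rw [hp3, hq3]; ring
  set r := Real.sqrt (p*q) with hrdef
  have hr : 0 ≤ r := Real.sqrt_nonneg _
  have hr2 : r^2 = p*q := Real.sq_sqrt (mul_nonneg hp hq)
  have hc : 0 ≤ Real.cos ψ₁ := Real.cos_nonneg_of_mem_Icc hψ₁
  have hc3 : Real.cos ψ₁ = r^3 := by
    have h1 : Real.cos ψ₁^2 = (r^3)^2 := by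
      have e1 : (r^3)^2 = (p*q)^3 := by
        rw [show (r^3)^2 = (r^2)^3 from by ring, hr2]
      have e2 : (p*q)^3 = (1-s₁)*(1+s₁) := by rw [mul_pow, hp3, hq3]
      have e3 : Real.cos ψ₁^2 = 1 - s₁^2 := Real.cos_sq' ψ₁
      rw [e1, e2, e3]; ring
    calc Real.cos ψ₁ = Real.sqrt (Real.cos ψ₁^2) := (Real.sqrt_sq hc).symm
      _ = Real.sqrt ((r^3)^2) := by rw [h1]
      _ = r^3 := Real.sqrt_sq (by positivity)
  have hpq0 : 0 < p + q := by
    by_contra h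
    push_neg at h
    have hp0 : p = 0 := le_antisymm (by linarith) hp
    have hq0 : q = 0 := le_antisymm (by linarith) hq
    rw [hp0, hq0] at hpq3; norm_num at hpq3
  have hrhs : Real.sqrt (2*(p+q)^3) = Real.sqrt 2 * (p + q) ^ ((3:ℝ)/2) := by
    rw [Real.sqrt_mul (by norm_num : (0:ℝ) ≤ 2)]
    congr 1
    rw [Real.sqrt_eq_rpow, ← Real.rpow_natCast (p+q) 3, ← Real.rpow_mul hpq0.le]
    norm_num
  constructor
  · intro ψ₂ hψ₂ φ hφ
    have hu : 0 ≤ Real.cos ψ₂ := Real.cos_nonneg_of_mem_Icc hψ₂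
    have huv : Real.cos ψ₂^2 + Real.sin ψ₂^2 = 1 := Real.cos_sq_add_sin_sq ψ₂
    have ht : |Real.cos φ| ≤ 1 := Real.abs_cos_le_one φ
    have key := aux_ineq p q r (Real.cos ψ₂) (Real.sin ψ₂) (Real.cos φ)
      hp hq hr hr2 hpq3 hu huv ht
    have hs : (q^3 - p^3)/2 = s₁ := by rw [hp3, hq3]; ring
    rw [hs, hc3.symm] at key
    calc Real.sqrt (2 * (1 + Real.cos ψ₁ * Real.cos ψ₂ +
            Real.cos φ * Real.sin ψ₁ * Real.sin ψ₂)) +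
          2 * Real.sqrt (Real.cos ψ₁ * Real.cos ψ₂)
        = Real.sqrt (2*(1 + Real.cos ψ₁*Real.cos ψ₂ + Real.cos φ*s₁*Real.sin ψ₂)) +
          2*Real.sqrt (Real.cos ψ₁*Real.cos ψ₂) := by rw [hs₁def]
      _ ≤ Real.sqrt (2*(p+q)^3) := key
      _ = Real.sqrt 2 * (p + q) ^ ((3:ℝ)/2) := hrhs
  · refine ⟨Real.arcsin ((q - p)/(p + q)), Real.arcsin_mem_Icc _, 0,
      ⟨le_refl 0, Real.pi_pos.le⟩, ?_⟩
    have habs : -1 ≤ (q - p)/(p + q) ∧ (q - p)/(p + q) ≤ 1 := by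
      constructor
      · rw [le_div_iff₀ hpq0]; linarith
      · rw [div_le_one hpq0]; linarith
    have hsin : Real.sin (Real.arcsin ((q - p)/(p + q))) = (q - p)/(p + q) :=
      Real.sin_arcsin habs.1 habs.2
    have hcos : Real.cos (Real.arcsin ((q - p)/(p + q))) = 2*r/(p + q) := by
      rw [Real.cos_arcsin]
      have e : 1 - ((q - p)/(p + q))^2 = (2*r/(p + q))^2 := by
        field_simp
        linear_combination (-4 : ℝ)*hr2
      rw [e, Real.sqrt_sq (by positivity)]
    rw [hsin, hcos, Real.cos_zero, hc3]
    have eX2 : 2*(1 + r^3*(2*r/(p+q)) + 1*s₁*((q-p)/(p+q)))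
        = 2*(p^2+q^2)^2/(p+q) := by
      have hs : s₁ = (q^3 - p^3)/2 := by rw [hp3, hq3]; ring
      rw [hs]
      field_simp
      ring_nf
      linear_combination (-(p+q))*hpq3 + (4*(r^2+p*q))*hr2
    have eY2 : r^3*(2*r/(p+q)) = 2*r^4/(p+q) := by ring
    have hX2n : 0 ≤ 2*(p^2+q^2)^2/(p+q) := by positivity
    have hY2n : 0 ≤ 2*r^4/(p+q) := by positivity
    have hcross : Real.sqrt (2*(p^2+q^2)^2/(p+q)) * Real.sqrt (2*r^4/(p+q))
        = 2*(p^2+q^2)*r^2/(p+q) := by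
      rw [← Real.sqrt_mul hX2n]
      have e : 2*(p^2+q^2)^2/(p+q) * (2*r^4/(p+q)) = (2*(p^2+q^2)*r^2/(p+q))^2 := by
        field_simp
      rw [e, Real.sqrt_sq (by positivity)]
    have hsum : Real.sqrt (2*(p^2+q^2)^2/(p+q)) + 2*Real.sqrt (2*r^4/(p+q))
        = Real.sqrt (2*(p+q)^3) := by
      have hsq : (Real.sqrt (2*(p^2+q^2)^2/(p+q)) + 2*Real.sqrt (2*r^4/(p+q)))^2
          = 2*(p+q)^3 := by
        rw [add_sq, Real.sq_sqrt hX2n, mul_pow, Real.sq_sqrt hY2n]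
        rw [show 2 * Real.sqrt (2*(p^2+q^2)^2/(p+q)) * (2*Real.sqrt (2*r^4/(p+q)))
          = 4*(Real.sqrt (2*(p^2+q^2)^2/(p+q)) * Real.sqrt (2*r^4/(p+q))) from by ring,
          hcross]
        field_simp
        linear_combination (4*p^2+4*q^2+4*r^2+4*p*q)*hr2
      calc Real.sqrt (2*(p^2+q^2)^2/(p+q)) + 2*Real.sqrt (2*r^4/(p+q))
          = Real.sqrt ((Real.sqrt (2*(p^2+q^2)^2/(p+q)) + 2*Real.sqrt (2*r^4/(p+q)))^2) :=
            (Real.sqrt_sq (by positivity)).symm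
        _ = Real.sqrt (2*(p+q)^3) := by rw [hsq]
    calc Real.sqrt (2*(1 + r^3*(2*r/(p+q)) + 1*s₁*((q-p)/(p+q)))) +
          2*Real.sqrt (r^3*(2*r/(p+q)))
        = Real.sqrt (2*(p^2+q^2)^2/(p+q)) + 2*Real.sqrt (2*r^4/(p+q)) := by
          rw [eX2, eY2]
      _ = Real.sqrt (2*(p+q)^3) := hsum
      _ = Real.sqrt 2 * (p + q) ^ ((3:ℝ)/2) := hrhs
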